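/- arXiv:2512.20096 — 4 statements merged into one kernel-verified Lean document; each statement's English description precedes it below -/
import Mathlib

section
/- (Hölder inequality for discounted cumulative costs.) In the discounted-cost framework, let α ∈ (0,1), let f, g : X → ℝ be bounded with f ≥ 0 pointwise and g ≥ ε pointwise for some ε > 0, and set h = f^{1/α} g^{1−1/α} (which is bounded and nonnegative). Then the discounted cumulative costs satisfy C_f(x) ≤ C_h(x)^α · C_g(x)^{1−α} for every x ∈ X. -/
/-!
Hölder inequality for discounted cumulative costs.
Framework as in the discounted-cost setting: `p` a probability kernel over a
finite index set `I`, `T` a transition map, `γ ∈ [0,1)`; `C_f` denotes the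
(unique) bounded solution of `C x = f x + γ Σ_i p x i * C (T x i)`.
-/

/-- `f` is bounded. -/
def Bdd {X : Type*} (f : X → ℝ) : Prop := ∃ M, ∀ x, |f x| ≤ M

/-- `C` is a (bounded) discounted cumulative cost for the one-step cost `f`. -/
def IsDCC {X I : Type*} [Fintype I] (p : X → I → ℝ) (T : X → I → X) (γ : ℝ)
    (f C : X → ℝ) : Prop :=
  Bdd C ∧ ∀ x, C x = f x + γ * ∑ i, p x i * C (T x i)


open Finset

/-- Weighted Hölder inequality for finite sums. -/
lemma holder_sum' {ι : Type*} (s : Finset ι) (w a b : ι → ℝ)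
    (hw : ∀ i, 0 ≤ w i) (ha : ∀ i, 0 ≤ a i) (hb : ∀ i, 0 ≤ b i)
    {α : ℝ} (hα0 : 0 < α) (hα1 : α < 1) :
    ∑ i ∈ s, w i * (a i ^ α * b i ^ (1 - α)) ≤
      (∑ i ∈ s, w i * a i) ^ α * (∑ i ∈ s, w i * b i) ^ (1 - α) := by
  have h1α : 0 < 1 - α := by linarith
  have hpq : Real.HolderConjugate (1/α) (1/(1-α)) := by
    refine Real.holderConjugate_iff.mpr ⟨?_, ?_⟩
    · rw [lt_div_iff₀ hα0]; linarith
    · rw [one_div, one_div, inv_inv, inv_inv]; ring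
  have key := Real.inner_le_Lp_mul_Lq_of_nonneg s hpq
    (f := fun i => (w i * a i) ^ α) (g := fun i => (w i * b i) ^ (1 - α))
    (fun i _ => Real.rpow_nonneg (mul_nonneg (hw i) (ha i)) _)
    (fun i _ => Real.rpow_nonneg (mul_nonneg (hw i) (hb i)) _)
  have e1 : ∀ i, ((w i * a i) ^ α) ^ (1/α) = w i * a i := by
    intro i
    rw [← Real.rpow_mul (mul_nonneg (hw i) (ha i)), mul_one_div_cancel hα0.ne',
      Real.rpow_one]
  have e2 : ∀ i, ((w i * b i) ^ (1-α)) ^ (1/(1-α)) = w i * b i := by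
    intro i
    rw [← Real.rpow_mul (mul_nonneg (hw i) (hb i)), mul_one_div_cancel h1α.ne',
      Real.rpow_one]
  have e3 : ∀ i, (w i * a i) ^ α * (w i * b i) ^ (1-α)
      = w i * (a i ^ α * b i ^ (1 - α)) := by
    intro i
    rw [Real.mul_rpow (hw i) (ha i), Real.mul_rpow (hw i) (hb i)]
    rw [show w i ^ α * a i ^ α * (w i ^ (1-α) * b i ^ (1-α))
        = (w i ^ α * w i ^ (1-α)) * (a i ^ α * b i ^ (1-α)) by ring]
    rw [← Real.rpow_add' (hw i) (by norm_num), show α + (1-α) = 1 by ring,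
      Real.rpow_one]
  simp only [e1, e2, e3] at key
  have d1 : 1 / (1/α) = α := by rw [one_div_one_div]
  have d2 : 1 / (1/(1-α)) = 1 - α := by rw [one_div_one_div]
  rw [d1, d2] at key
  exact key

/-- If bounded-below `D` satisfies `γ P D ≤ D`, then `D ≥ 0`. -/
lemma dcc_nonneg_aux {X I : Type*} [Fintype I]
    (p : X → I → ℝ) (hp0 : ∀ x i, 0 ≤ p x i) (hp1 : ∀ x, ∑ i, p x i = 1)
    (T : X → I → X) (γ : ℝ) (hγ0 : 0 ≤ γ) (hγ1 : γ < 1)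
    (D : X → ℝ) (M : ℝ) (hM : ∀ x, -M ≤ D x)
    (hstep : ∀ x, γ * ∑ i, p x i * D (T x i) ≤ D x) : ∀ x, 0 ≤ D x := by
  set M' := max M 0 with hM'
  have hM'0 : 0 ≤ M' := le_max_right _ _
  have claim : ∀ n : ℕ, ∀ x, -(γ ^ n * M') ≤ D x := by
    intro n
    induction n with
    | zero =>
      intro x
      have : -M' ≤ -M := neg_le_neg (le_max_left M 0)
      simpa using this.trans (hM x)
    | succ n ih =>
      intro x
      have h1 : ∀ i, p x i * (-(γ ^ n * M')) ≤ p x i * D (T x i) := fun i =>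
        mul_le_mul_of_nonneg_left (ih (T x i)) (hp0 x i)
      have h2 : ∑ i, p x i * (-(γ ^ n * M')) ≤ ∑ i, p x i * D (T x i) :=
        Finset.sum_le_sum fun i _ => h1 i
      have h3 : ∑ i, p x i * (-(γ ^ n * M')) = -(γ ^ n * M') := by
        rw [← Finset.sum_mul, hp1 x, one_mul]
      have := (hstep x).trans' (mul_le_mul_of_nonneg_left (h3 ▸ h2) hγ0)
      calc -(γ ^ (n+1) * M') = γ * -(γ ^ n * M') := by ring
        _ ≤ D x := this
  intro x
  have hlim : Filter.Tendsto (fun n : ℕ => -(γ ^ n * M')) Filter.atTop (nhds 0) := by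
    have : Filter.Tendsto (fun n : ℕ => γ ^ n) Filter.atTop (nhds 0) :=
      tendsto_pow_atTop_nhds_zero_of_lt_one hγ0 hγ1
    simpa using (this.mul_const M').neg
  exact le_of_tendsto hlim (Filter.Eventually.of_forall fun n => claim n x)

/-- Hölder inequality for discounted cumulative costs: if `α ∈ (0,1)`,
`f ≥ 0`, `g ≥ ε > 0` are bounded and `h = f^{1/α} g^{1-1/α}`, then
`C_f(x) ≤ C_h(x)^α * C_g(x)^{1-α}` for every `x`. -/
theorem discounted_cost_holder
    {X I : Type*} [Fintype I]
    (p : X → I → ℝ) (hp0 : ∀ x i, 0 ≤ p x i) (hp1 : ∀ x, ∑ i, p x i = 1)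
    (T : X → I → X) (γ : ℝ) (hγ0 : 0 ≤ γ) (hγ1 : γ < 1)
    (α : ℝ) (hα0 : 0 < α) (hα1 : α < 1)
    (f g : X → ℝ) (hf : Bdd f) (hg : Bdd g)
    (hf0 : ∀ x, 0 ≤ f x)
    (ε : ℝ) (hε : 0 < ε) (hgε : ∀ x, ε ≤ g x)
    (Cf Ch Cg : X → ℝ)
    (hCf : IsDCC p T γ f Cf)
    (hCh : IsDCC p T γ (fun x => f x ^ (1 / α) * g x ^ (1 - 1 / α)) Ch)
    (hCg : IsDCC p T γ g Cg) :
    ∀ x, Cf x ≤ Ch x ^ α * Cg x ^ (1 - α) := by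
  have hg0 : ∀ x, 0 < g x := fun x => hε.trans_le (hgε x)
  set h : X → ℝ := fun x => f x ^ (1 / α) * g x ^ (1 - 1 / α) with hh
  have hh0 : ∀ x, 0 ≤ h x := fun x =>
    mul_nonneg (Real.rpow_nonneg (hf0 x) _) (Real.rpow_nonneg (hg0 x).le _)
  -- Ch and Cg are nonnegative
  obtain ⟨Mh, hMh⟩ := hCh.1
  obtain ⟨Mg, hMg⟩ := hCg.1
  obtain ⟨Mf, hMf⟩ := hCf.1
  have hCh0 : ∀ x, 0 ≤ Ch x := by
    apply dcc_nonneg_aux p hp0 hp1 T γ hγ0 hγ1 Ch Mh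
      (fun x => (abs_le.mp (hMh x)).1)
    intro x
    have := hCh.2 x
    nlinarith [hh0 x]
  have hCg0 : ∀ x, 0 ≤ Cg x := by
    apply dcc_nonneg_aux p hp0 hp1 T γ hγ0 hγ1 Cg Mg
      (fun x => (abs_le.mp (hMg x)).1)
    intro x
    have := hCg.2 x
    nlinarith [(hg0 x).le]
  -- the candidate supersolution
  set φ : X → ℝ := fun x => Ch x ^ α * Cg x ^ (1 - α) with hφ
  have hφ0 : ∀ x, 0 ≤ φ x := fun x =>
    mul_nonneg (Real.rpow_nonneg (hCh0 x) _) (Real.rpow_nonneg (hCg0 x) _)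
  have h1α : 0 < 1 - α := by linarith
  -- key supersolution inequality
  have key : ∀ x, f x + γ * ∑ i, p x i * φ (T x i) ≤ φ x := by
    intro x
    set A := ∑ i, p x i * Ch (T x i) with hA
    set B := ∑ i, p x i * Cg (T x i) with hB
    have hA0 : 0 ≤ A := Finset.sum_nonneg fun i _ =>
      mul_nonneg (hp0 x i) (hCh0 _)
    have hB0 : 0 ≤ B := Finset.sum_nonneg fun i _ =>
      mul_nonneg (hp0 x i) (hCg0 _)
    have eCh : Ch x = h x + γ * A := hCh.2 x
    have eCg : Cg x = g x + γ * B := hCg.2 x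
    -- step 1: two-term Hölder
    have step1 : h x ^ α * g x ^ (1-α) + (γ*A) ^ α * (γ*B) ^ (1-α) ≤ φ x := by
      have := holder_sum' (Finset.univ : Finset (Fin 2)) (fun _ => 1)
        ![h x, γ*A] ![g x, γ*B] (fun _ => zero_le_one)
        (fun i => by fin_cases i <;> simp [hh0 x, mul_nonneg hγ0 hA0, mul_nonneg hγ0 hB0])
        (fun i => by fin_cases i <;> simp [(hg0 x).le, mul_nonneg hγ0 hA0, mul_nonneg hγ0 hB0])
        hα0 hα1
      simpa [Fin.sum_univ_two, eCh, eCg, hφ] using this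
    -- step 2: h^α g^{1-α} = f
    have step2 : h x ^ α * g x ^ (1-α) = f x := by
      rw [hh]
      rw [Real.mul_rpow (Real.rpow_nonneg (hf0 x) _) (Real.rpow_nonneg (hg0 x).le _)]
      rw [← Real.rpow_mul (hf0 x), ← Real.rpow_mul (hg0 x).le,
        one_div_mul_cancel hα0.ne', Real.rpow_one]
      rw [mul_assoc, ← Real.rpow_add (hg0 x)]
      rw [show (1 - 1/α) * α + (1-α) = 0 by field_simp; ring, Real.rpow_zero, mul_one]
    -- step 3: pull out γ
    have step3 : (γ*A) ^ α * (γ*B) ^ (1-α) = γ * (A ^ α * B ^ (1-α)) := by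
      rw [Real.mul_rpow hγ0 hA0, Real.mul_rpow hγ0 hB0,
        show γ ^ α * A ^ α * (γ ^ (1-α) * B ^ (1-α))
          = (γ ^ α * γ ^ (1-α)) * (A ^ α * B ^ (1-α)) by ring,
        ← Real.rpow_add' hγ0 (by norm_num), show α + (1-α) = 1 by ring, Real.rpow_one]
    -- step 4: weighted Hölder on the sum
    have step4 : ∑ i, p x i * φ (T x i) ≤ A ^ α * B ^ (1-α) := by
      have := holder_sum' (Finset.univ : Finset I) (p x)
        (fun i => Ch (T x i)) (fun i => Cg (T x i)) (hp0 x)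
        (fun i => hCh0 _) (fun i => hCg0 _) hα0 hα1
      simpa [hφ, hA, hB] using this
    calc f x + γ * ∑ i, p x i * φ (T x i)
        ≤ f x + γ * (A ^ α * B ^ (1-α)) := by
          gcongr
      _ = h x ^ α * g x ^ (1-α) + (γ*A) ^ α * (γ*B) ^ (1-α) := by
          rw [step2, step3]
      _ ≤ φ x := step1
  -- apply the nonnegativity lemma to D = φ - Cf
  have hD : ∀ x, 0 ≤ φ x - Cf x := by
    apply dcc_nonneg_aux p hp0 hp1 T γ hγ0 hγ1 _ Mf
    · intro x
      have h1 := hφ0 x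
      linarith [(abs_le.mp (hMf x)).2]
    · intro x
      have eCf : Cf x = f x + γ * ∑ i, p x i * Cf (T x i) := hCf.2 x
      have := key x
      have expand : ∑ i, p x i * (φ (T x i) - Cf (T x i))
          = ∑ i, p x i * φ (T x i) - ∑ i, p x i * Cf (T x i) := by
        rw [← Finset.sum_sub_distrib]
        exact Finset.sum_congr rfl fun i _ => by ring
      rw [expand]
      linarith [key x]
  intro x
  have := hD x
  simp only [hφ] at this
  linarith
end

section
/- (Regret bound for information-directed sampling.) In the discounted-cost framework with γ ∈ (0,1), let H : X → ℝ be bounded with H ≥ 0, define Θ(x) = H(x) − γ Σ_{i∈I} p(x,i) H(T(x,i)), and assume Θ(x) ≥ 0 for all x. Let α ∈ (0,1), Ψ ≥ 0, and let Δ : X → ℝ be bounded with 0 ≤ Δ(x) ≤ Ψ^α Θ(x)^{1−α} for all x ∈ X. Then the discounted cumulative cost of Δ satisfies C_Δ(x) ≤ (Ψ/(1−γ))^α · H(x)^{1−α} for every x ∈ X. -/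
/-- Regret bound for information-directed sampling. -/
theorem ids_regret_bound
    {X I : Type*} [Fintype I]
    (p : X → I → ℝ) (hp0 : ∀ x i, 0 ≤ p x i) (hp1 : ∀ x, ∑ i, p x i = 1)
    (T : X → I → X) (γ : ℝ) (hγ0 : 0 < γ) (hγ1 : γ < 1)
    (H : X → ℝ) (hH : Bdd H) (hH0 : ∀ x, 0 ≤ H x)
    (hΘ0 : ∀ x, 0 ≤ H x - γ * ∑ i, p x i * H (T x i))
    (α : ℝ) (hα0 : 0 < α) (hα1 : α < 1)
    (Ψ : ℝ) (hΨ : 0 ≤ Ψ)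
    (Δ : X → ℝ) (hΔbdd : Bdd Δ) (hΔ0 : ∀ x, 0 ≤ Δ x)
    (hΔΘ : ∀ x, Δ x ≤ Ψ ^ α * (H x - γ * ∑ i, p x i * H (T x i)) ^ (1 - α))
    (CΔ : X → ℝ) (hCΔ : IsDCC p T γ Δ CΔ) :
    ∀ x, CΔ x ≤ (Ψ / (1 - γ)) ^ α * H x ^ (1 - α) := by
  obtain ⟨⟨MC, hMC⟩, hCeq⟩ := hCΔ
  have h1γ : (0:ℝ) < 1 - γ := by linarith
  set c : ℝ := (Ψ / (1 - γ)) ^ α with hc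
  have hc0 : 0 ≤ c := Real.rpow_nonneg (by positivity) _
  set B : X → ℝ := fun x => c * H x ^ (1 - α) with hBdef
  have hB0 : ∀ x, 0 ≤ B x := fun x =>
    mul_nonneg hc0 (Real.rpow_nonneg (hH0 x) _)
  -- Key supersolution inequality: Δ x + γ * ∑ p B(T) ≤ B x
  have key : ∀ x, Δ x + γ * ∑ i, p x i * B (T x i) ≤ B x := by
    intro x
    set Θ : ℝ := H x - γ * ∑ i, p x i * H (T x i) with hΘdef
    have hΘ : 0 ≤ Θ := hΘ0 x
    -- Jensen over Option I
    set w : Option I → ℝ := fun j => j.elim (1 - γ) (fun i => γ * p x i) with hw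
    set t : Option I → ℝ := fun j => j.elim (Θ / (1 - γ)) (fun i => H (T x i)) with ht
    have hw0 : ∀ j ∈ Finset.univ, 0 ≤ w j := by
      rintro (_|i) _
      · exact h1γ.le
      · exact mul_nonneg hγ0.le (hp0 x i)
    have hw1 : ∑ j : Option I, w j = 1 := by
      rw [Fintype.sum_option]
      simp only [hw, Option.elim]
      rw [← Finset.mul_sum, hp1 x]
      ring
    have hwt : ∑ j : Option I, w j • t j = H x := by
      rw [Fintype.sum_option]
      simp only [hw, ht, Option.elim, smul_eq_mul]
      have : (1 - γ) * (Θ / (1 - γ)) = Θ := by field_simp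
      rw [this]
      have : ∑ i : I, γ * p x i * H (T x i) = γ * ∑ i : I, p x i * H (T x i) := by
        rw [Finset.mul_sum]; congr 1; ext i; ring
      rw [this, hΘdef]; ring
    have hmem : ∀ j ∈ Finset.univ, t j ∈ Set.Ici (0:ℝ) := by
      rintro (_|i) _
      · exact div_nonneg hΘ h1γ.le
      · exact hH0 _
    have jensen := (Real.concaveOn_rpow (by linarith : (0:ℝ) ≤ 1 - α)
      (by linarith : (1:ℝ) - α ≤ 1)).le_map_sum hw0 hw1 hmem
    rw [hwt] at jensen
    simp only [smul_eq_mul] at jensen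
    rw [Fintype.sum_option] at jensen
    simp only [hw, ht, Option.elim] at jensen
    -- jensen : (1-γ) * (Θ/(1-γ))^(1-α) + ∑ i, γ * p x i * H(T x i)^(1-α) ≤ H x ^ (1-α)
    have hΨα : Ψ ^ α = c * (1 - γ) ^ α := by
      rw [hc, Real.div_rpow hΨ h1γ.le]
      field_simp
    have hpow : (1 - γ) * (Θ / (1 - γ)) ^ (1 - α) = (1 - γ) ^ α * Θ ^ (1 - α) := by
      have hpos : (0:ℝ) < (1 - γ) ^ (1 - α) := Real.rpow_pos_of_pos h1γ _
      have hmul : (1 - γ) ^ α * (1 - γ) ^ (1 - α) = 1 - γ := by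
        rw [← Real.rpow_add h1γ]; norm_num
      rw [Real.div_rpow hΘ h1γ.le]
      field_simp
      linear_combination (-(Θ ^ (1 - α))) * hmul
    have hΔx : Δ x ≤ c * ((1 - γ) * (Θ / (1 - γ)) ^ (1 - α)) := by
      rw [hpow, ← mul_assoc, ← hΨα]
      exact hΔΘ x
    have hsum : γ * ∑ i, p x i * B (T x i)
        = c * ∑ i, γ * p x i * H (T x i) ^ (1 - α) := by
      simp only [hBdef]
      rw [Finset.mul_sum, Finset.mul_sum]
      congr 1; ext i; ring
    calc Δ x + γ * ∑ i, p x i * B (T x i)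
        ≤ c * ((1 - γ) * (Θ / (1 - γ)) ^ (1 - α))
            + c * ∑ i, γ * p x i * H (T x i) ^ (1 - α) := by
          rw [hsum]; exact add_le_add hΔx (le_refl _)
      _ = c * ((1 - γ) * (Θ / (1 - γ)) ^ (1 - α)
            + ∑ i, γ * p x i * H (T x i) ^ (1 - α)) := by ring
      _ ≤ c * (H x ^ (1 - α)) := by
          apply mul_le_mul_of_nonneg_left _ hc0
          convert jensen using 2
      _ = B x := rfl
  -- Iteration: CΔ x - B x ≤ γ^n * MC
  have hM0 : ∀ x, CΔ x - B x ≤ MC := fun x => by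
    have := (abs_le.1 (hMC x)).2
    have := hB0 x
    linarith
  have iter : ∀ n : ℕ, ∀ x, CΔ x - B x ≤ γ ^ n * MC := by
    intro n
    induction n with
    | zero => simpa using hM0
    | succ n ih =>
      intro x
      have h1 : CΔ x - B x ≤ γ * ∑ i, p x i * (CΔ (T x i) - B (T x i)) := by
        have := key x
        have heq := hCeq x
        have hsum : ∑ i, p x i * (CΔ (T x i) - B (T x i))
            = (∑ i, p x i * CΔ (T x i)) - ∑ i, p x i * B (T x i) := by
          rw [← Finset.sum_sub_distrib]; congr 1; ext i; ring
        rw [hsum]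
        nlinarith [key x, hCeq x]
      have h2 : ∑ i, p x i * (CΔ (T x i) - B (T x i)) ≤ γ ^ n * MC := by
        calc ∑ i, p x i * (CΔ (T x i) - B (T x i))
            ≤ ∑ i, p x i * (γ ^ n * MC) :=
              Finset.sum_le_sum fun i _ =>
                mul_le_mul_of_nonneg_left (ih (T x i)) (hp0 x i)
          _ = γ ^ n * MC := by rw [← Finset.sum_mul, hp1 x, one_mul]
      calc CΔ x - B x ≤ γ * ∑ i, p x i * (CΔ (T x i) - B (T x i)) := h1
        _ ≤ γ * (γ ^ n * MC) := mul_le_mul_of_nonneg_left h2 hγ0.le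
        _ = γ ^ (n + 1) * MC := by ring
  intro x
  have hlim : Filter.Tendsto (fun n : ℕ => γ ^ n * MC) Filter.atTop (nhds 0) := by
    have := (tendsto_pow_atTop_nhds_zero_of_lt_one hγ0.le hγ1).mul_const MC
    simpa using this
  have hle : CΔ x - B x ≤ 0 := ge_of_tendsto' hlim fun n => iter n x
  have : CΔ x ≤ B x := by linarith
  exact this
end

section
/- Let γ ∈ (0,1), α ∈ (0,1), Ψ ≥ 0, and let (Δ_t)_{t∈ℕ} and (Θ_t)_{t∈ℕ} be sequences of nonnegative reals such that Δ_t ≤ Ψ^α Θ_t^{1−α} for every t and Σ_{t=0}^∞ γ^t Θ_t converges. Then Σ_{t=0}^∞ γ^t Δ_t converges and Σ_{t=0}^∞ γ^t Δ_t ≤ (Ψ/(1−γ))^α · (Σ_{t=0}^∞ γ^t Θ_t)^{1−α}. -/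
/-!
Sequence form of the discounted regret bound: if the information ratio is
bounded by `Ψ` at every time step, i.e. `Δ_t ≤ Ψ^α Θ_t^{1−α}`, and the total
discounted information `Σ γ^t Θ_t` converges, then the total discounted regret
converges and `Σ γ^t Δ_t ≤ (Ψ/(1−γ))^α (Σ γ^t Θ_t)^{1−α}`.
-/

theorem discounted_regret_bound_sequence
    (γ α Ψ : ℝ) (hγ0 : 0 < γ) (hγ1 : γ < 1) (hα0 : 0 < α) (hα1 : α < 1)
    (hΨ : 0 ≤ Ψ)
    (Δ Θ : ℕ → ℝ) (hΔ0 : ∀ t, 0 ≤ Δ t) (hΘ0 : ∀ t, 0 ≤ Θ t)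
    (hratio : ∀ t, Δ t ≤ Ψ ^ α * Θ t ^ (1 - α))
    (hsum : Summable fun t => γ ^ t * Θ t) :
    (Summable fun t => γ ^ t * Δ t) ∧
      (∑' t, γ ^ t * Δ t) ≤ (Ψ / (1 - γ)) ^ α * (∑' t, γ ^ t * Θ t) ^ (1 - α) := by
  have hγt : ∀ t : ℕ, (0:ℝ) < γ ^ t := fun t => pow_pos hγ0 t
  set p : ℝ := 1 / α with hp
  set q : ℝ := 1 / (1 - α) with hq
  have h1α : 0 < 1 - α := by linarith
  have hpq : p.HolderConjugate q := by
    rw [Real.holderConjugate_iff]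
    constructor
    · rw [hp]; rw [lt_div_iff₀ hα0]; linarith
    · rw [hp, hq]; field_simp; ring
  set f : ℕ → ℝ := fun t => (Ψ * γ ^ t) ^ α with hf
  set g : ℕ → ℝ := fun t => (γ ^ t * Θ t) ^ (1 - α) with hg
  have hf0 : ∀ t, 0 ≤ f t := fun t =>
    Real.rpow_nonneg (mul_nonneg hΨ (hγt t).le) _
  have hg0 : ∀ t, 0 ≤ g t := fun t =>
    Real.rpow_nonneg (mul_nonneg (hγt t).le (hΘ0 t)) _
  have hfp : ∀ t, f t ^ p = Ψ * γ ^ t := by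
    intro t
    show ((Ψ * γ ^ t) ^ α) ^ p = Ψ * γ ^ t
    rw [← Real.rpow_mul (mul_nonneg hΨ (hγt t).le) α p]
    rw [hp, mul_one_div, div_self hα0.ne', Real.rpow_one]
  have hgq : ∀ t, g t ^ q = γ ^ t * Θ t := by
    intro t
    show ((γ ^ t * Θ t) ^ (1 - α)) ^ q = γ ^ t * Θ t
    rw [← Real.rpow_mul (mul_nonneg (hγt t).le (hΘ0 t)) (1 - α) q]
    rw [hq, mul_one_div, div_self h1α.ne', Real.rpow_one]
  have hf_sum : Summable fun t => f t ^ p := by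
    simp only [hfp]
    exact (summable_geometric_of_lt_one hγ0.le hγ1).mul_left Ψ
  have hg_sum : Summable fun t => g t ^ q := by
    simp only [hgq]; exact hsum
  obtain ⟨hsummable, hbound⟩ :=
    Real.summable_and_inner_le_Lp_mul_Lq_tsum_of_nonneg hpq hf0 hg0 hf_sum hg_sum
  have hle : ∀ t, γ ^ t * Δ t ≤ f t * g t := by
    intro t
    have : f t * g t = γ ^ t * (Ψ ^ α * Θ t ^ (1 - α)) := by
      show (Ψ * γ ^ t) ^ α * (γ ^ t * Θ t) ^ (1 - α) = _
      rw [Real.mul_rpow hΨ (hγt t).le, Real.mul_rpow (hγt t).le (hΘ0 t),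
        ← Real.rpow_natCast γ t, ← Real.rpow_mul hγ0.le, ← Real.rpow_mul hγ0.le]
      have : (t:ℝ) * α + (t:ℝ) * (1 - α) = (t:ℝ) := by ring
      calc Ψ ^ α * γ ^ ((t:ℝ) * α) * (γ ^ ((t:ℝ) * (1 - α)) * Θ t ^ (1 - α))
          = γ ^ ((t:ℝ) * α) * γ ^ ((t:ℝ) * (1 - α)) * (Ψ ^ α * Θ t ^ (1 - α)) := by ring
        _ = γ ^ (t:ℝ) * (Ψ ^ α * Θ t ^ (1 - α)) := by
            rw [← Real.rpow_add hγ0, this]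
    rw [this]
    exact mul_le_mul_of_nonneg_left (hratio t) (hγt t).le
  have hsumΔ : Summable fun t => γ ^ t * Δ t :=
    Summable.of_nonneg_of_le (fun t => mul_nonneg (hγt t).le (hΔ0 t)) hle hsummable
  refine ⟨hsumΔ, ?_⟩
  have h1 : (∑' t, γ ^ t * Δ t) ≤ ∑' t, f t * g t := Summable.tsum_le_tsum hle hsumΔ hsummable
  have h2 : (∑' t, f t ^ p) = Ψ / (1 - γ) := by
    simp only [hfp]
    rw [tsum_mul_left, tsum_geometric_of_lt_one hγ0.le hγ1]
    field_simp
  have h3 : (∑' t, g t ^ q) = ∑' t, γ ^ t * Θ t := by simp only [hgq]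
  have hpinv : 1 / p = α := by rw [hp]; field_simp
  have hqinv : 1 / q = 1 - α := by rw [hq]; field_simp
  calc (∑' t, γ ^ t * Δ t) ≤ (∑' t, f t ^ p) ^ (1 / p) * (∑' t, g t ^ q) ^ (1 / q) :=
        le_trans h1 hbound
    _ = (Ψ / (1 - γ)) ^ α * (∑' t, γ ^ t * Θ t) ^ (1 - α) := by
        rw [h2, h3, hpinv, hqinv]
end

section
/- For θ ∈ (1/2,1) and γ ∈ (0,1), the quantity D = 1 − 4γ²θ(1−θ) satisfies 0 < D < 1, and both exponents ζ_± = ln((1 ± √D)/(2γθ)) / ln((1−θ)/θ) are well defined and solve the transcendental equation (1−θ)^ζ θ^{1−ζ} + θ^ζ (1−θ)^{1−ζ} = 1/γ. -/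
/-!
For `θ ∈ (1/2,1)` and `γ ∈ (0,1)`, the discriminant `D = 1 − 4γ²θ(1−θ)`
satisfies `0 < D < 1`, and both exponents
`ζ_± = ln((1 ± √D)/(2γθ)) / ln((1−θ)/θ)` are well defined (the arguments of
the logarithms are positive and the denominator is nonzero) and solve the
transcendental equation `(1−θ)^ζ θ^{1−ζ} + θ^ζ (1−θ)^{1−ζ} = 1/γ`.
-/

/-- The discriminant `D = 1 − 4γ²θ(1−θ)`. -/
noncomputable def Dq (θ γ : ℝ) : ℝ := 1 - 4 * γ ^ 2 * θ * (1 - θ)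

/-- The exponent `ζ_+ = ln((1 + √D)/(2γθ)) / ln((1−θ)/θ)`. -/
noncomputable def zetaPlus (θ γ : ℝ) : ℝ :=
  Real.log ((1 + Real.sqrt (Dq θ γ)) / (2 * γ * θ)) / Real.log ((1 - θ) / θ)

/-- The exponent `ζ_− = ln((1 − √D)/(2γθ)) / ln((1−θ)/θ)`. -/
noncomputable def zetaMinus (θ γ : ℝ) : ℝ :=
  Real.log ((1 - Real.sqrt (Dq θ γ)) / (2 * γ * θ)) / Real.log ((1 - θ) / θ)

/-- Key lemma: if `u > 0` satisfies the quadratic `γθu² + γ(1−θ) = u`, then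
`ζ = log u / log((1−θ)/θ)` solves the transcendental equation. -/
lemma zeta_solves (θ γ u : ℝ) (hθ1 : 1 / 2 < θ) (hθ2 : θ < 1) (hγ1 : 0 < γ)
    (hu : 0 < u) (hq : γ * θ * u ^ 2 + γ * (1 - θ) = u) :
    (1 - θ) ^ (Real.log u / Real.log ((1 - θ) / θ)) *
        θ ^ (1 - Real.log u / Real.log ((1 - θ) / θ)) +
      θ ^ (Real.log u / Real.log ((1 - θ) / θ)) *
        (1 - θ) ^ (1 - Real.log u / Real.log ((1 - θ) / θ)) = 1 / γ := by
  have hθ0 : 0 < θ := by linarith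
  have h1θ : 0 < 1 - θ := by linarith
  have hr : (0 : ℝ) < (1 - θ) / θ := div_pos h1θ hθ0
  have hr1 : (1 - θ) / θ < 1 := (div_lt_one hθ0).mpr (by linarith)
  have hL : Real.log ((1 - θ) / θ) ≠ 0 := ne_of_lt (Real.log_neg hr hr1)
  set L := Real.log ((1 - θ) / θ) with hLdef
  set ζ := Real.log u / L with hζ
  have hζL : ζ * L = Real.log u := div_mul_cancel₀ _ hL
  have hLsplit : L = Real.log (1 - θ) - Real.log θ :=
    Real.log_div (ne_of_gt h1θ) (ne_of_gt hθ0)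
  have e1 : (1 - θ) ^ ζ * θ ^ (1 - ζ) = θ * u := by
    rw [Real.rpow_def_of_pos h1θ, Real.rpow_def_of_pos hθ0, ← Real.exp_add]
    have : Real.log (1 - θ) * ζ + Real.log θ * (1 - ζ) = Real.log θ + ζ * L := by
      rw [hLsplit]; ring
    rw [this, Real.exp_add, hζL, Real.exp_log hθ0, Real.exp_log hu]
  have e2 : θ ^ ζ * (1 - θ) ^ (1 - ζ) = (1 - θ) / u := by
    rw [Real.rpow_def_of_pos h1θ, Real.rpow_def_of_pos hθ0, ← Real.exp_add]
    have : Real.log θ * ζ + Real.log (1 - θ) * (1 - ζ) =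
        Real.log (1 - θ) - ζ * L := by
      rw [hLsplit]; ring
    rw [this, Real.exp_sub, hζL, Real.exp_log h1θ, Real.exp_log hu]
  rw [e1, e2]
  field_simp
  nlinarith [hu, hγ1]

theorem zeta_exponents_solve_equation
    (θ γ : ℝ) (hθ : θ ∈ Set.Ioo (1 / 2 : ℝ) 1) (hγ : γ ∈ Set.Ioo (0 : ℝ) 1) :
    0 < Dq θ γ ∧ Dq θ γ < 1 ∧
    0 < (1 + Real.sqrt (Dq θ γ)) / (2 * γ * θ) ∧
    0 < (1 - Real.sqrt (Dq θ γ)) / (2 * γ * θ) ∧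
    Real.log ((1 - θ) / θ) ≠ 0 ∧
    (∀ ζ : ℝ, ζ = zetaPlus θ γ ∨ ζ = zetaMinus θ γ →
      (1 - θ) ^ ζ * θ ^ (1 - ζ) + θ ^ ζ * (1 - θ) ^ (1 - ζ) = 1 / γ) := by
  obtain ⟨hθ1, hθ2⟩ := hθ
  obtain ⟨hγ1, hγ2⟩ := hγ
  have hθ0 : 0 < θ := by linarith
  have h1θ : 0 < 1 - θ := by linarith
  have hD0 : 0 < Dq θ γ := by
    unfold Dq; nlinarith [sq_nonneg (2 * θ - 1), sq_nonneg γ, sq_nonneg (1 - γ)]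
  have hD1 : Dq θ γ < 1 := by
    unfold Dq; nlinarith [pow_pos hγ1 2, mul_pos hθ0 h1θ]
  have hs0 : 0 < Real.sqrt (Dq θ γ) := Real.sqrt_pos.mpr hD0
  have hs1 : Real.sqrt (Dq θ γ) < 1 := by
    rw [show (1 : ℝ) = Real.sqrt 1 by simp]
    exact Real.sqrt_lt_sqrt hD0.le hD1
  have hssq : Real.sqrt (Dq θ γ) ^ 2 = Dq θ γ := Real.sq_sqrt hD0.le
  have hssq' : Real.sqrt (Dq θ γ) ^ 2 = 1 - 4 * γ ^ 2 * θ * (1 - θ) := by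
    rw [hssq]; rfl
  have hden : 0 < 2 * γ * θ := by positivity
  have hup : 0 < (1 + Real.sqrt (Dq θ γ)) / (2 * γ * θ) :=
    div_pos (by linarith) hden
  have hum : 0 < (1 - Real.sqrt (Dq θ γ)) / (2 * γ * θ) :=
    div_pos (by linarith) hden
  have hr : (0 : ℝ) < (1 - θ) / θ := div_pos h1θ hθ0
  have hr1 : (1 - θ) / θ < 1 := (div_lt_one hθ0).mpr (by linarith)
  have hL : Real.log ((1 - θ) / θ) ≠ 0 := ne_of_lt (Real.log_neg hr hr1)
  refine ⟨hD0, hD1, hup, hum, hL, ?_⟩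
  rintro ζ (rfl | rfl)
  · apply zeta_solves θ γ _ hθ1 hθ2 hγ1 hup
    field_simp
    nlinarith [hssq']
  · apply zeta_solves θ γ _ hθ1 hθ2 hγ1 hum
    field_simp
    nlinarith [hssq']
end
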